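/- Let B be a bicategory. The following data form a bicategory Ω(B): objects are pairs (b, f) of an object b of B and a 1-morphism f : b → b; 1-morphisms (b, f) → (b', f') are pairs (F, η) of a 1-morphism F : b → b' in B and a 2-morphism η : f' ∘ F ⟹ F ∘ f; 2-morphisms (F, η) ⟹ (F', η') are 2-morphisms Γ : F ⟹ F' in B satisfying (Γ ∘ f) ∙ η = η' ∙ (f' ∘ Γ); the composite of (F, η) : (b, f) → (b', f') and (G, ρ) : (b', f') → (b'', f'') is (G ∘ F, (G ∘ η) ∙ (ρ ∘ F)) (up to the associators of B); identities, vertical and horizontal composition of 2-morphisms, and the associators and unitors inherited from B satisfy all the bicategory axioms. -/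

import Mathlib

/-!
Statement 17: for a bicategory `B`, the endomorphisms of `B` form a bicategory `Ω(B)`:
objects are pairs `(b, f)` of an object `b` and a 1-morphism `f : b → b`; 1-morphisms
`(b, f) → (b', f')` are pairs `(F, η)` with `F : b → b'` and `η : F ≫ f' ⟶ f ≫ F`;
2-morphisms are 2-morphisms `Γ : F ⟶ F'` of `B` compatible with the `η`'s; composition,
identities and the coherence data are inherited from `B` and satisfy the bicategory axioms.
-/

open CategoryTheory CategoryTheory.Bicategory

universe w v u

variable {B : Type u} [Bicategory.{w, v} B]

/-- An object of `Ω(B)`: an object `base` of `B` together with a 1-morphism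
`loop : base ⟶ base`. -/
structure OmegaObj (B : Type u) [Bicategory.{w, v} B] : Type max u v where
  base : B
  loop : base ⟶ base

/-- A 1-morphism `(F, η) : (b, f) ⟶ (b', f')` of `Ω(B)`: a 1-morphism `F : b ⟶ b'` of `B`
together with a 2-morphism `η : f' ∘ F ⟹ F ∘ f` (written diagrammatically as
`F ≫ f' ⟶ f ≫ F`). -/
structure OmegaHom (X Y : OmegaObj B) : Type max v w where
  F : X.base ⟶ Y.base
  η : F ≫ Y.loop ⟶ X.loop ≫ F

/-- A 2-morphism `(F, η) ⟹ (F', η')` of `Ω(B)`: a 2-morphism `Γ : F ⟹ F'` of `B` such that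
`(Γ ∘ f) ∙ η = η' ∙ (f' ∘ Γ)`. -/
@[ext]
structure OmegaTwo {X Y : OmegaObj B} (u v : OmegaHom X Y) : Type w where
  Γ : u.F ⟶ v.F
  compat : (Γ ▷ Y.loop) ≫ v.η = u.η ≫ (X.loop ◁ Γ)

/-- The hom-categories of `Ω(B)`: vertical composition of 2-morphisms is inherited from `B`. -/
instance omegaHomCategory (X Y : OmegaObj B) : Category (OmegaHom X Y) where
  Hom u v := OmegaTwo u v
  id u := ⟨𝟙 u.F, by simp⟩
  comp s t := ⟨s.Γ ≫ t.Γ, by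
    rw [Bicategory.comp_whiskerRight, Category.assoc, t.compat, ← Category.assoc, s.compat,
      Category.assoc, ← Bicategory.whiskerLeft_comp]⟩
  id_comp s := OmegaTwo.ext (Category.id_comp s.Γ)
  comp_id s := OmegaTwo.ext (Category.comp_id s.Γ)
  assoc s t r := OmegaTwo.ext (Category.assoc s.Γ t.Γ r.Γ)

/-- The objects, 1-morphisms, identities and composition of `Ω(B)`: the identity of `(b, f)`
is `(𝟙 b, (λ_ f).hom ≫ (ρ_ f).inv)`, and the composite of `(F, η)` and `(G, ρ)` is
`(F ≫ G, (G ∘ η) ∙ (ρ ∘ F))` (up to the associators of `B`). -/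
def omegaCategoryStruct : CategoryStruct.{max v w} (OmegaObj B) where
  Hom := OmegaHom
  id X := ⟨𝟙 X.base, (λ_ X.loop).hom ≫ (ρ_ X.loop).inv⟩
  comp {X Y Z} u v := ⟨u.F ≫ v.F,
    (α_ u.F v.F Z.loop).hom ≫ (u.F ◁ v.η) ≫ (α_ u.F Y.loop v.F).inv ≫ (u.η ▷ v.F)
      ≫ (α_ X.loop u.F v.F).hom⟩


section OmegaAux

open Bicategory

lemma wl_compat {X Y Z : OmegaObj B} (u : OmegaHom X Y) {v w : OmegaHom Y Z}
    (Γ : OmegaTwo v w) :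
    ((u.F ◁ Γ.Γ) ▷ Z.loop) ≫
      ((α_ u.F w.F Z.loop).hom ≫ (u.F ◁ w.η) ≫ (α_ u.F Y.loop w.F).inv ≫ (u.η ▷ w.F)
        ≫ (α_ X.loop u.F w.F).hom) =
    ((α_ u.F v.F Z.loop).hom ≫ (u.F ◁ v.η) ≫ (α_ u.F Y.loop v.F).inv ≫ (u.η ▷ v.F)
        ≫ (α_ X.loop u.F v.F).hom) ≫ (X.loop ◁ (u.F ◁ Γ.Γ)) := by
  rw [associator_naturality_middle_assoc, ← Bicategory.whiskerLeft_comp_assoc, Γ.compat,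
    Bicategory.whiskerLeft_comp_assoc, associator_inv_naturality_right_assoc,
    whisker_exchange_assoc, Category.assoc, associator_naturality_right]
  simp only [Category.assoc]

lemma wr_compat {X Y Z : OmegaObj B} {u v : OmegaHom X Y} (Γ : OmegaTwo u v)
    (w : OmegaHom Y Z) :
    ((Γ.Γ ▷ w.F) ▷ Z.loop) ≫
      ((α_ v.F w.F Z.loop).hom ≫ (v.F ◁ w.η) ≫ (α_ v.F Y.loop w.F).inv ≫ (v.η ▷ w.F)
        ≫ (α_ X.loop v.F w.F).hom) =
    ((α_ u.F w.F Z.loop).hom ≫ (u.F ◁ w.η) ≫ (α_ u.F Y.loop w.F).inv ≫ (u.η ▷ w.F)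
        ≫ (α_ X.loop u.F w.F).hom) ≫ (X.loop ◁ (Γ.Γ ▷ w.F)) := by
  rw [associator_naturality_left_assoc, ← whisker_exchange_assoc,
    associator_inv_naturality_left_assoc, ← comp_whiskerRight_assoc, Γ.compat,
    comp_whiskerRight_assoc, Category.assoc, associator_naturality_middle]
  simp only [Category.assoc]

/-- Build an iso of `OmegaHom`s from an iso in `B` compatible with the `η`'s. -/
def omegaIso {X Y : OmegaObj B} {u v : OmegaHom X Y} (e : u.F ≅ v.F)
    (h : (e.hom ▷ Y.loop) ≫ v.η = u.η ≫ (X.loop ◁ e.hom)) : u ≅ v where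
  hom := ⟨e.hom, h⟩
  inv := ⟨e.inv, by
    rw [← cancel_mono (X.loop ◁ e.hom), Category.assoc, ← h, ← Category.assoc,
      ← Bicategory.comp_whiskerRight, e.inv_hom_id, Bicategory.id_whiskerRight,
      Category.id_comp, Category.assoc, ← Bicategory.whiskerLeft_comp, e.inv_hom_id,
      Bicategory.whiskerLeft_id, Category.comp_id]⟩
  hom_inv_id := OmegaTwo.ext e.hom_inv_id
  inv_hom_id := OmegaTwo.ext e.inv_hom_id

lemma assoc_compat {X Y Z W : OmegaObj B} (u : OmegaHom X Y) (v : OmegaHom Y Z)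
    (w : OmegaHom Z W) :
    ((α_ u.F v.F w.F).hom ▷ W.loop) ≫
      ((omegaCategoryStruct (B := B)).comp u ((omegaCategoryStruct (B := B)).comp v w)).η =
    ((omegaCategoryStruct (B := B)).comp ((omegaCategoryStruct (B := B)).comp u v) w).η
      ≫ (X.loop ◁ (α_ u.F v.F w.F).hom) := by
  unfold omegaCategoryStruct
  dsimp only
  bicategory

lemma lu_compat {X Y : OmegaObj B} (u : OmegaHom X Y) :
    ((λ_ u.F).hom ▷ Y.loop) ≫ u.η =
    ((omegaCategoryStruct (B := B)).comp ((omegaCategoryStruct (B := B)).id X) u).η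
      ≫ (X.loop ◁ (λ_ u.F).hom) := by
  unfold omegaCategoryStruct
  dsimp only
  bicategory

lemma ru_compat {X Y : OmegaObj B} (u : OmegaHom X Y) :
    ((ρ_ u.F).hom ▷ Y.loop) ≫ u.η =
    ((omegaCategoryStruct (B := B)).comp u ((omegaCategoryStruct (B := B)).id Y)).η
      ≫ (X.loop ◁ (ρ_ u.F).hom) := by
  unfold omegaCategoryStruct
  dsimp only
  bicategory

end OmegaAux

/-- The bicategory `Ω(B)`. -/
def omegaBicategory (B : Type u) [Bicategory.{w, v} B] :
    Bicategory.{w, max v w, max u v} (OmegaObj B) where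
  toCategoryStruct := omegaCategoryStruct
  homCategory := omegaHomCategory
  whiskerLeft {X Y Z} u {v w} Γ := ⟨u.F ◁ Γ.Γ, wl_compat u Γ⟩
  whiskerRight {X Y Z} {u v} Γ w := ⟨Γ.Γ ▷ w.F, wr_compat Γ w⟩
  associator {X Y Z W} u v w := omegaIso (α_ u.F v.F w.F) (assoc_compat u v w)
  leftUnitor {X Y} u := omegaIso (λ_ u.F) (lu_compat u)
  rightUnitor {X Y} u := omegaIso (ρ_ u.F) (ru_compat u)
  whiskerLeft_id := by intros; apply OmegaTwo.ext; exact Bicategory.whiskerLeft_id ..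
  whiskerLeft_comp := by intros; apply OmegaTwo.ext; exact Bicategory.whiskerLeft_comp ..
  id_whiskerLeft := by intros; apply OmegaTwo.ext; exact Bicategory.id_whiskerLeft ..
  comp_whiskerLeft := by intros; apply OmegaTwo.ext; exact Bicategory.comp_whiskerLeft ..
  id_whiskerRight := by intros; apply OmegaTwo.ext; exact Bicategory.id_whiskerRight ..
  comp_whiskerRight := by intros; apply OmegaTwo.ext; exact Bicategory.comp_whiskerRight ..
  whiskerRight_id := by intros; apply OmegaTwo.ext; exact Bicategory.whiskerRight_id ..
  whiskerRight_comp := by intros; apply OmegaTwo.ext; exact Bicategory.whiskerRight_comp ..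
  whisker_assoc := by intros; apply OmegaTwo.ext; exact Bicategory.whisker_assoc ..
  whisker_exchange := by intros; apply OmegaTwo.ext; exact Bicategory.whisker_exchange ..
  pentagon := by intros; apply OmegaTwo.ext; exact Bicategory.pentagon ..
  triangle := by intros; apply OmegaTwo.ext; exact Bicategory.triangle ..

/-- For any bicategory `B`, the data above — pairs `(b, f)` as objects, pairs `(F, η)` as
1-morphisms with the specified identities and composition, compatible 2-morphisms `Γ` of `B`
as 2-morphisms, and whiskerings, associators and unitors inherited from `B` — form a
bicategory `Ω(B)`. -/
theorem omega_is_bicategory (B : Type u) [Bicategory.{w, v} B] :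
    ∃ inst : Bicategory.{w, max v w, max u v} (OmegaObj B),
      inst.toCategoryStruct = omegaCategoryStruct (B := B) ∧
      HEq (@Bicategory.homCategory (OmegaObj B) inst) (omegaHomCategory (B := B)) := by
  exact ⟨omegaBicategory B, rfl, HEq.rfl⟩
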